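/- Let Cat(m) = C(2m,m)/(m+1). Let T : ℕ → ℚ and let d : ℕ → ℚ satisfy d(0) = 0 and, for every q ≥ 0, d(q+1) = T(q+1) + 2·Σ_{k=0}^{q} Cat(q−k)·d(k). Then for every q ≥ 0, d(q+1) = 4·d(q) − 2·Σ_{k=1}^{q} Cat(q−k)·T(k) + T(q+1). -/

import Mathlib

open Finset

private lemma coef_eq (m : ℕ) :
    ((Nat.choose (2 * m) m : ℚ) / ((m : ℕ) + 1)) = (catalan m : ℚ) := by
  have h : ((m : ℚ) + 1) * (catalan m : ℚ) = (Nat.choose (2 * m) m : ℚ) := by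
    exact_mod_cast congrArg (Nat.cast : ℕ → ℚ) (succ_mul_catalan_eq_centralBinom m)
  have hm : ((m : ℚ) + 1) ≠ 0 := by positivity
  rw [← h]
  field_simp

private lemma cat_conv (p : ℕ) :
    (catalan (p + 1) : ℚ) = ∑ m ∈ Finset.range (p + 1), (catalan m : ℚ) * (catalan (p - m) : ℚ) := by
  have h := catalan_succ p
  rw [Fin.sum_univ_eq_sum_range (fun i => catalan i * catalan (p - i)) (p + 1)] at h
  exact_mod_cast congrArg (Nat.cast : ℕ → ℚ) h

private lemma S_eq (T d : ℕ → ℚ) (h0 : d 0 = 0)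
    (hrec : ∀ q : ℕ, d (q + 1) = T (q + 1) +
      2 * ∑ k ∈ Finset.range (q + 1), (catalan (q - k) : ℚ) * d k) (q : ℕ) :
    ∑ k ∈ Finset.range (q + 1), (catalan (q - k) : ℚ) * d k
      = 2 * d q - ∑ i ∈ Finset.range q, (catalan (q - 1 - i) : ℚ) * T (i + 1) := by
  cases q with
  | zero => simp [h0]
  | succ n =>
    set S : ℚ := ∑ k ∈ Finset.range (n + 2), (catalan (n + 1 - k) : ℚ) * d k with hS
    set A : ℚ := ∑ i ∈ Finset.range (n + 1), (catalan (n - i) : ℚ) * T (i + 1) with hA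
    have step1 : S = ∑ i ∈ Finset.range (n + 1), (catalan (n - i) : ℚ) * d (i + 1) := by
      rw [hS, Finset.sum_range_succ']
      simp [h0, Nat.succ_sub_succ]
    have step2 : S = A + 2 * ∑ i ∈ Finset.range (n + 1),
        ∑ j ∈ Finset.range (i + 1), (catalan (n - i) : ℚ) * ((catalan (i - j) : ℚ) * d j) := by
      rw [step1]
      have hterm : ∀ i ∈ Finset.range (n + 1), (catalan (n - i) : ℚ) * d (i + 1)
          = (catalan (n - i) : ℚ) * T (i + 1)
            + 2 * ∑ j ∈ Finset.range (i + 1), (catalan (n - i) : ℚ) * ((catalan (i - j) : ℚ) * d j) := by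
        intro i _
        rw [hrec i, ← Finset.mul_sum]
        ring
      rw [Finset.sum_congr rfl hterm, Finset.sum_add_distrib, ← Finset.mul_sum]
    have swap : ∑ i ∈ Finset.range (n + 1),
        ∑ j ∈ Finset.range (i + 1), (catalan (n - i) : ℚ) * ((catalan (i - j) : ℚ) * d j)
        = ∑ j ∈ Finset.range (n + 1),
            ∑ i ∈ Finset.Ico j (n + 1), (catalan (n - i) : ℚ) * ((catalan (i - j) : ℚ) * d j) := by
      simp_rw [Finset.range_eq_Ico]
      exact (Finset.sum_Ico_Ico_comm 0 (n + 1)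
        (fun a b => (catalan (n - b) : ℚ) * ((catalan (b - a) : ℚ) * d a))).symm
    have inner : ∀ j ∈ Finset.range (n + 1),
        ∑ i ∈ Finset.Ico j (n + 1), (catalan (n - i) : ℚ) * ((catalan (i - j) : ℚ) * d j)
          = (catalan (n + 1 - j) : ℚ) * d j := by
      intro j hj
      rw [Finset.sum_Ico_eq_sum_range]
      have hjn : j ≤ n := Nat.lt_succ_iff.mp (Finset.mem_range.mp hj)
      have h1 : n + 1 - j = n - j + 1 := by omega
      rw [h1, cat_conv (n - j), Finset.sum_mul]
      apply Finset.sum_congr rfl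
      intro m hm
      have e1 : n - (j + m) = n - j - m := by omega
      have e2 : j + m - j = m := by omega
      rw [e1, e2]
      ring
    have split : S = (∑ j ∈ Finset.range (n + 1), (catalan (n + 1 - j) : ℚ) * d j) + d (n + 1) := by
      rw [hS, Finset.sum_range_succ]
      simp
    have hsum : ∑ j ∈ Finset.range (n + 1), (catalan (n + 1 - j) : ℚ) * d j = S - d (n + 1) := by
      rw [split]; ring
    have key : S = A + 2 * (S - d (n + 1)) := by
      calc S = A + 2 * ∑ i ∈ Finset.range (n + 1),
          ∑ j ∈ Finset.range (i + 1), (catalan (n - i) : ℚ) * ((catalan (i - j) : ℚ) * d j) := step2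
        _ = A + 2 * ∑ j ∈ Finset.range (n + 1), (catalan (n + 1 - j) : ℚ) * d j := by
            rw [swap, Finset.sum_congr rfl inner]
        _ = A + 2 * (S - d (n + 1)) := by rw [hsum]
    have : S = 2 * d (n + 1) - A := by linarith
    simpa [Nat.succ_sub_succ] using this

theorem perturbative_lemma_step1 (T d : ℕ → ℚ)
    (h0 : d 0 = 0)
    (hrec : ∀ q : ℕ, d (q + 1) = T (q + 1) +
      2 * ∑ k ∈ Finset.range (q + 1),
        ((Nat.choose (2 * (q - k)) (q - k) : ℚ) / ((q - k : ℕ) + 1)) * d k) :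
    ∀ q : ℕ, d (q + 1) = 4 * d q -
      2 * ∑ k ∈ Finset.Icc 1 q,
        ((Nat.choose (2 * (q - k)) (q - k) : ℚ) / ((q - k : ℕ) + 1)) * T k
      + T (q + 1) := by
  simp only [coef_eq] at hrec ⊢
  intro q
  have hSq := S_eq T d h0 hrec q
  have hicc : ∑ k ∈ Finset.Icc 1 q, (catalan (q - k) : ℚ) * T k
      = ∑ i ∈ Finset.range q, (catalan (q - 1 - i) : ℚ) * T (i + 1) := by
    rw [show Finset.Icc 1 q = Finset.Ico 1 (q + 1) by rw [Finset.Ico_add_one_right_eq_Icc],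
      Finset.sum_Ico_eq_sum_range]
    apply Finset.sum_congr (by simp)
    intro i _
    have e : q - (1 + i) = q - 1 - i := by omega
    rw [e, add_comm 1 i]
  rw [hrec q, hSq, hicc]
  ring
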